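/- Let A(x) = A₀ + Σ_k x_k B_k with A₀, B_k Hermitian, and let S_min be the eigenspace of λ_min(A(x₀)). Then the subdifferential at x₀ of the concave function x ↦ λ_min(A(x)), taken as the subdifferential of the convex function −λ_min(A(x)) with a sign, satisfies ∂(λ_min ∘ A)(x₀) = −m_{S_min} in the sense that ∂((−λ_min) ∘ A)(x₀) = m'_{S_min} where m'_{S_min} = conv{(−⟨B_1 v, v⟩,…,−⟨B_t v, v⟩) : v ∈ S_min, ‖v‖ = 1}. -/

import Mathlib

open Matrix
open scoped Matrix ComplexOrder

/-- The smallest eigenvalue of a matrix, as the infimum of its real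
eigenvalues. -/
noncomputable def lambdaMin {n : ℕ} (A : Matrix (Fin n) (Fin n) ℂ) : ℝ :=
  sInf {r : ℝ | Module.End.HasEigenvalue (Matrix.toEuclideanLin A) (r : ℂ)}

/-- The subdifferential of `f : ℝᵗ → ℝ` at `x₀`. -/
def subdiff {t : ℕ} (f : (Fin t → ℝ) → ℝ) (x₀ : Fin t → ℝ) : Set (Fin t → ℝ) :=
  {v | ∀ y, f y - f x₀ ≥ ∑ k, v k * (y k - x₀ k)}

open Finset
open scoped ComplexConjugate

section Helpers

variable {n t : ℕ} {N : Matrix (Fin n) (Fin n) ℂ}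

/-- The (real) Rayleigh quotient value of a matrix at a vector. -/
noncomputable def rqv {n : ℕ} (N : Matrix (Fin n) (Fin n) ℂ)
    (v : EuclideanSpace ℂ (Fin n)) : ℝ :=
  (inner ℂ (Matrix.toEuclideanLin N v) v : ℂ).re

lemma toEuclideanLin_eigenvectorBasis (hN : N.IsHermitian) (j : Fin n) :
    Matrix.toEuclideanLin N (hN.eigenvectorBasis j) =
      (hN.eigenvalues j : ℝ) • hN.eigenvectorBasis j := by
  have h := hN.mulVec_eigenvectorBasis j
  apply (WithLp.equiv 2 (Fin n → ℂ)).injective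
  rw [Matrix.toEuclideanLin_apply]
  ext i
  simpa using congrFun h i

lemma repr_toEuclideanLin (hN : N.IsHermitian) (v : EuclideanSpace ℂ (Fin n)) (j : Fin n) :
    hN.eigenvectorBasis.repr (Matrix.toEuclideanLin N v) j =
      (hN.eigenvalues j : ℂ) * hN.eigenvectorBasis.repr v j := by
  have hsym := Matrix.isHermitian_iff_isSymmetric.mp hN
  rw [OrthonormalBasis.repr_apply_apply, ← hsym (hN.eigenvectorBasis j) v,
    toEuclideanLin_eigenvectorBasis hN j]
  rw [show (hN.eigenvalues j • hN.eigenvectorBasis j : EuclideanSpace ℂ (Fin n))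
      = ((hN.eigenvalues j : ℂ) • hN.eigenvectorBasis j) by
    rw [Complex.coe_smul]]
  rw [inner_smul_left, OrthonormalBasis.repr_apply_apply, Complex.conj_ofReal]

lemma rq_expansion (hN : N.IsHermitian) (v : EuclideanSpace ℂ (Fin n)) :
    rqv N v = ∑ j, hN.eigenvalues j * Complex.normSq (hN.eigenvectorBasis.repr v j) := by
  have h1 : (inner ℂ (Matrix.toEuclideanLin N v) v : ℂ) =
      inner ℂ (hN.eigenvectorBasis.repr (Matrix.toEuclideanLin N v)) (hN.eigenvectorBasis.repr v) :=
    (hN.eigenvectorBasis.repr.inner_map_map _ _).symm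
  rw [rqv, h1, PiLp.inner_apply]
  simp only [repr_toEuclideanLin hN v, RCLike.inner_apply, _root_.map_mul, Complex.conj_ofReal]
  rw [Complex.re_sum]
  refine Finset.sum_congr rfl fun j _ => ?_
  set c := hN.eigenvectorBasis.repr v j
  have hc : conj c * c = (Complex.normSq c : ℂ) := by rw [mul_comm, Complex.mul_conj]
  rw [show c * ((hN.eigenvalues j : ℂ) * conj c) = (hN.eigenvalues j : ℂ) * conj c * c by ring]
  calc ((hN.eigenvalues j : ℂ) * conj c * c).re
      = ((hN.eigenvalues j : ℂ) * (Complex.normSq c : ℂ)).re := by rw [mul_assoc, hc]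
    _ = hN.eigenvalues j * Complex.normSq c := by
        rw [← Complex.ofReal_mul, Complex.ofReal_re]

lemma norm_sq_expansion (hN : N.IsHermitian) (v : EuclideanSpace ℂ (Fin n)) :
    ‖v‖ ^ 2 = ∑ j, Complex.normSq (hN.eigenvectorBasis.repr v j) := by
  rw [← hN.eigenvectorBasis.repr.norm_map v, EuclideanSpace.norm_eq,
    Real.sq_sqrt (by positivity)]
  refine Finset.sum_congr rfl fun j _ => ?_
  rw [Complex.sq_norm]

noncomputable def muMin (hn : 0 < n) (hN : N.IsHermitian) : ℝ :=
  Finset.univ.inf' (Finset.univ_nonempty_iff.mpr ⟨⟨0, hn⟩⟩) hN.eigenvalues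

lemma hasEigenvalue_eigenvalues (hN : N.IsHermitian) (j : Fin n) :
    Module.End.HasEigenvalue (Matrix.toEuclideanLin N) ((hN.eigenvalues j : ℂ)) := by
  apply Module.End.hasEigenvalue_of_hasEigenvector (x := hN.eigenvectorBasis j)
  constructor
  · rw [Module.End.mem_eigenspace_iff, toEuclideanLin_eigenvectorBasis hN j, Complex.coe_smul]
  · exact hN.eigenvectorBasis.orthonormal.ne_zero j

lemma muMin_le_of_hasEigenvalue (hn : 0 < n) (hN : N.IsHermitian) {r : ℝ}
    (hr : Module.End.HasEigenvalue (Matrix.toEuclideanLin N) ((r : ℂ))) :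
    muMin hn hN ≤ r := by
  obtain ⟨u, hu⟩ := (Submodule.ne_bot_iff _).mp hr
  obtain ⟨humem, hune⟩ := hu
  rw [Module.End.mem_eigenspace_iff] at humem
  have hnorm : (0:ℝ) < ‖u‖ ^ 2 := pow_pos (norm_pos_iff.mpr hune) 2
  have h1 : rqv N u = r * ‖u‖ ^ 2 := by
    rw [rqv, humem, inner_smul_left, Complex.conj_ofReal, inner_self_eq_norm_sq_to_K]
    simp [Complex.mul_re, ← Complex.ofReal_pow]
  have h2 : muMin hn hN * ‖u‖ ^ 2 ≤ rqv N u := by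
    rw [rq_expansion hN u, norm_sq_expansion hN u, Finset.mul_sum]
    apply Finset.sum_le_sum
    intro j _
    exact mul_le_mul_of_nonneg_right (Finset.inf'_le _ (Finset.mem_univ j))
      (Complex.normSq_nonneg _)
  nlinarith

lemma lambdaMin_eq_muMin (hn : 0 < n) (hN : N.IsHermitian) : lambdaMin N = muMin hn hN := by
  obtain ⟨j₀, hj₀⟩ := Finset.exists_mem_eq_inf' (Finset.univ_nonempty_iff.mpr ⟨⟨0, hn⟩⟩)
    hN.eigenvalues
  have hmem : muMin hn hN ∈ {r : ℝ | Module.End.HasEigenvalue (Matrix.toEuclideanLin N) (r:ℂ)} := by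
    show Module.End.HasEigenvalue _ _
    rw [show muMin hn hN = hN.eigenvalues j₀ from hj₀.2]
    exact hasEigenvalue_eigenvalues hN j₀
  refine le_antisymm (csInf_le ⟨muMin hn hN, fun r hr => muMin_le_of_hasEigenvalue hn hN hr⟩ hmem)
    (le_csInf ⟨_, hmem⟩ fun r hr => muMin_le_of_hasEigenvalue hn hN hr)

lemma lambdaMin_le_rq (hn : 0 < n) (hN : N.IsHermitian) (v : EuclideanSpace ℂ (Fin n))
    (hv : ‖v‖ = 1) : lambdaMin N ≤ rqv N v := by
  rw [lambdaMin_eq_muMin hn hN, rq_expansion hN v]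
  have h2 := norm_sq_expansion hN v
  rw [hv] at h2
  calc muMin hn hN = muMin hn hN * (1:ℝ)^2 := by ring
    _ = ∑ j, muMin hn hN * Complex.normSq (hN.eigenvectorBasis.repr v j) := by
        rw [← Finset.mul_sum, ← h2]
    _ ≤ _ := Finset.sum_le_sum fun j _ => mul_le_mul_of_nonneg_right
        (Finset.inf'_le _ (Finset.mem_univ j)) (Complex.normSq_nonneg _)

lemma rq_of_mem_eigenspace {r : ℝ} {v : EuclideanSpace ℂ (Fin n)}
    (hv : ‖v‖ = 1)
    (hmem : v ∈ Module.End.eigenspace (Matrix.toEuclideanLin N) ((r : ℂ))) :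
    rqv N v = r := by
  rw [Module.End.mem_eigenspace_iff] at hmem
  rw [rqv, hmem, inner_smul_left, Complex.conj_ofReal, inner_self_eq_norm_sq_to_K, hv]
  simp [Complex.mul_re]

lemma exists_unit_eigenvector (hn : 0 < n) (hN : N.IsHermitian) :
    ∃ v : EuclideanSpace ℂ (Fin n), ‖v‖ = 1 ∧
      v ∈ Module.End.eigenspace (Matrix.toEuclideanLin N) ((lambdaMin N : ℂ)) := by
  obtain ⟨j₀, hj₀⟩ := Finset.exists_mem_eq_inf' (Finset.univ_nonempty_iff.mpr ⟨⟨0, hn⟩⟩)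
    hN.eigenvalues
  refine ⟨hN.eigenvectorBasis j₀, hN.eigenvectorBasis.orthonormal.1 j₀, ?_⟩
  rw [Module.End.mem_eigenspace_iff, toEuclideanLin_eigenvectorBasis hN j₀,
    lambdaMin_eq_muMin hn hN, show muMin hn hN = hN.eigenvalues j₀ from hj₀.2, Complex.coe_smul]

lemma mem_eigenspace_of_rq_eq (hn : 0 < n) (hN : N.IsHermitian) {v : EuclideanSpace ℂ (Fin n)}
    (hv : ‖v‖ = 1) (heq : rqv N v = lambdaMin N) :
    v ∈ Module.End.eigenspace (Matrix.toEuclideanLin N) ((lambdaMin N : ℂ)) := by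
  rw [lambdaMin_eq_muMin hn hN] at heq ⊢
  set μ := muMin hn hN with hμ
  have hsum : ∑ j, (hN.eigenvalues j - μ) * Complex.normSq (hN.eigenvectorBasis.repr v j) = 0 := by
    have h2 := norm_sq_expansion hN v
    rw [hv] at h2
    simp only [sub_mul, Finset.sum_sub_distrib, ← Finset.mul_sum, ← h2, ← rq_expansion hN v, heq]
    ring
  have hterm : ∀ j ∈ Finset.univ, (hN.eigenvalues j - μ) *
      Complex.normSq (hN.eigenvectorBasis.repr v j) = 0 := by
    apply (Finset.sum_eq_zero_iff_of_nonneg ?_).mp hsum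
    intro j _
    exact mul_nonneg (sub_nonneg.mpr (Finset.inf'_le _ (Finset.mem_univ j)))
      (Complex.normSq_nonneg _)
  rw [Module.End.mem_eigenspace_iff]
  apply hN.eigenvectorBasis.repr.injective
  ext j
  rw [repr_toEuclideanLin hN v j, _root_.map_smul]
  have := hterm j (Finset.mem_univ j)
  rcases mul_eq_zero.mp this with h | h
  · have : hN.eigenvalues j = μ := by linarith [sub_eq_zero.mp h]
    simp [this, PiLp.smul_apply, smul_eq_mul]
  · have : hN.eigenvectorBasis.repr v j = 0 := Complex.normSq_eq_zero.mp h
    simp [this]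

lemma isHermitian_affine (A₀ : Matrix (Fin n) (Fin n) ℂ) (hA₀ : A₀.IsHermitian)
    (B : Fin t → Matrix (Fin n) (Fin n) ℂ) (hB : ∀ k, (B k).IsHermitian) (x : Fin t → ℝ) :
    (A₀ + ∑ k, ((x k : ℂ)) • B k).IsHermitian := by
  apply hA₀.add
  apply Finset.sum_induction _ _ (fun a b ha hb => ha.add hb) isHermitian_zero
  intro k _
  unfold Matrix.IsHermitian
  rw [conjTranspose_smul, (hB k).eq, Complex.star_def, Complex.conj_ofReal]

lemma rq_affine (A₀ : Matrix (Fin n) (Fin n) ℂ) (B : Fin t → Matrix (Fin n) (Fin n) ℂ)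
    (x : Fin t → ℝ) (v : EuclideanSpace ℂ (Fin n)) :
    rqv (A₀ + ∑ k, ((x k : ℂ)) • B k) v = rqv A₀ v + ∑ k, x k * rqv (B k) v := by
  rw [rqv, map_add, map_sum, LinearMap.add_apply, LinearMap.sum_apply, inner_add_left, sum_inner]
  simp only [_root_.map_smul, LinearMap.smul_apply, inner_smul_left, Complex.star_def,
    Complex.conj_ofReal]
  rw [Complex.add_re, Complex.re_sum]
  congr 1
  refine Finset.sum_congr rfl fun k _ => ?_
  rw [show ((x k : ℂ) * inner ℂ (Matrix.toEuclideanLin (B k) v) v).re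
      = x k * (inner ℂ (Matrix.toEuclideanLin (B k) v) v : ℂ).re from by
    simp [Complex.mul_re]]
  rfl

lemma continuous_rqv (N : Matrix (Fin n) (Fin n) ℂ) : Continuous (rqv N) :=
  Complex.continuous_re.comp
    (Continuous.inner (Matrix.toEuclideanLin N).continuous_of_finiteDimensional continuous_id)

lemma isCompact_convexHull_fin {t : ℕ} {M : Set (Fin t → ℝ)} (hM : IsCompact M) :
    IsCompact (convexHull ℝ M) := by
  rcases M.eq_empty_or_nonempty with h | ⟨p0, hp0⟩
  · simp [h]
  set f : ((Fin (t+1) → ℝ) × (Fin (t+1) → Fin t → ℝ)) → (Fin t → ℝ) :=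
    fun p => ∑ i, p.1 i • p.2 i with hfdef
  have hf : Continuous f := by
    apply continuous_finset_sum
    intro i _
    exact ((continuous_apply i).comp continuous_fst).smul
      ((continuous_apply i).comp continuous_snd)
  have hD : IsCompact ((stdSimplex ℝ (Fin (t+1))) ×ˢ (Set.univ.pi fun _ : Fin (t+1) => M)) :=
    (isCompact_stdSimplex ℝ _).prod (isCompact_univ_pi fun _ => hM)
  have himg : convexHull ℝ M
      = f '' ((stdSimplex ℝ (Fin (t+1))) ×ˢ (Set.univ.pi fun _ : Fin (t+1) => M)) := by
    apply Set.Subset.antisymm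
    · intro x hx
      rw [convexHull_eq_union] at hx
      simp only [Set.mem_iUnion, exists_prop] at hx
      obtain ⟨s, hsM, hsai, hxs⟩ := hx
      have hcard : s.card ≤ t + 1 := by
        have h1 := hsai.card_le_finrank_succ
        have h2 : Module.finrank ℝ ↥(vectorSpan ℝ (Set.range ((↑) : s → (Fin t → ℝ)))) ≤ t := by
          have := Submodule.finrank_le (vectorSpan ℝ (Set.range ((↑) : s → (Fin t → ℝ))))
          simpa using this
        have h3 : Fintype.card {x // x ∈ s} = s.card := Fintype.card_coe s
        omega
      rw [Finset.convexHull_eq] at hxs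
      obtain ⟨w, hw0, hw1, hwx⟩ := hxs
      rw [Finset.centerMass_eq_of_sum_1 _ _ hw1] at hwx
      set m := s.card with hm
      set σ : Fin m ≃ {x // x ∈ s} := s.equivFin.symm with hσ
      set a : Fin (t+1) → ℝ := fun j => if h : (j : ℕ) < m then w (σ ⟨j, h⟩) else 0 with ha
      set z : Fin (t+1) → (Fin t → ℝ) :=
        fun j => if h : (j : ℕ) < m then (σ ⟨j, h⟩ : Fin t → ℝ) else p0 with hz
      have key : ∀ (G : Type) [inst : AddCommGroup G] [Module ℝ G] (g : ℝ → (Fin t → ℝ) → G),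
          g 0 p0 = 0 → ∑ j : Fin (t+1), g (a j) (z j) = ∑ y ∈ s, g (w y) y := by
        intro G _ _ g hg0
        have e1 : ∑ j : Fin (t+1), g (a j) (z j)
            = ∑ jn ∈ Finset.range (t+1),
              (if h : jn < m then g (w (σ ⟨jn, h⟩)) (σ ⟨jn, h⟩ : Fin t → ℝ) else 0) := by
          rw [← Fin.sum_univ_eq_sum_range]
          refine Finset.sum_congr rfl fun j _ => ?_
          by_cases h : (j : ℕ) < m
          · simp only [ha, hz, dif_pos h]
          · simp only [ha, hz, dif_neg h, hg0]
        have e2 : ∑ jn ∈ Finset.range (t+1),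
              (if h : jn < m then g (w (σ ⟨jn, h⟩)) (σ ⟨jn, h⟩ : Fin t → ℝ) else 0)
            = ∑ jn ∈ Finset.range m,
              (if h : jn < m then g (w (σ ⟨jn, h⟩)) (σ ⟨jn, h⟩ : Fin t → ℝ) else 0) := by
          symm
          apply Finset.sum_subset
          · exact Finset.range_subset_range.mpr (by omega)
          · intro jn _ hjn
            rw [Finset.mem_range] at hjn
            rw [dif_neg hjn]
        have e3 : ∑ jn ∈ Finset.range m,
              (if h : jn < m then g (w (σ ⟨jn, h⟩)) (σ ⟨jn, h⟩ : Fin t → ℝ) else 0)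
            = ∑ i : Fin m, g (w (σ i)) (σ i : Fin t → ℝ) := by
          rw [← Fin.sum_univ_eq_sum_range
            (fun jn => if h : jn < m then g (w (σ ⟨jn, h⟩)) (σ ⟨jn, h⟩ : Fin t → ℝ) else 0) m]
          refine Finset.sum_congr rfl fun i _ => ?_
          rw [dif_pos i.isLt]
        have e4 : ∑ i : Fin m, g (w (σ i)) (σ i : Fin t → ℝ)
            = ∑ y ∈ s, g (w y) y := by
          rw [← Finset.sum_coe_sort s (fun y => g (w y) y)]
          exact σ.sum_comp (fun y : {x // x ∈ s} => g (w y) (y : Fin t → ℝ))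
        rw [e1, e2, e3, e4]
      refine ⟨(a, z), ⟨?_, ?_⟩, ?_⟩
      · constructor
        · intro j
          by_cases h : (j : ℕ) < m
          · simpa [ha, dif_pos h] using hw0 _ (σ ⟨j, h⟩).2
          · simp [ha, dif_neg h]
        · have := key ℝ (fun r _ => r) rfl
          simpa [ha] using this.trans hw1
      · intro j _
        by_cases h : (j : ℕ) < m
        · simpa [hz, dif_pos h] using hsM (σ ⟨j, h⟩).2
        · simpa [hz, dif_neg h] using hp0
      · have := key (Fin t → ℝ) (fun r y => r • y) (zero_smul ℝ p0)
        simpa [hfdef] using this.trans hwx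
    · rintro x ⟨⟨a, z⟩, ⟨⟨ha0, ha1⟩, hzM⟩, rfl⟩
      have : f (a, z) = Finset.univ.centerMass a z := by
        rw [Finset.centerMass_eq_of_sum_1 _ _ ha1]
      rw [this]
      exact Finset.centerMass_mem_convexHull _ (fun i _ => ha0 i) (by rw [ha1]; norm_num)
        (fun i _ => hzM i (Set.mem_univ i))
  rw [himg]
  exact hD.image hf

end Helpers

/-- The subdifferential of the convex function `x ↦ -λ_min(A₀ + ∑ x_k B_k)`
at `x₀` equals the sign-reversed moment of the eigenspace of
`λ_min(A(x₀))`. -/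
theorem subdiff_neg_lambdaMin_eq_neg_moment {n t : ℕ} (hn : 0 < n)
    (A₀ : Matrix (Fin n) (Fin n) ℂ) (hA₀ : A₀.IsHermitian)
    (B : Fin t → Matrix (Fin n) (Fin n) ℂ) (hB : ∀ k, (B k).IsHermitian)
    (x₀ : Fin t → ℝ)
    (A : (Fin t → ℝ) → Matrix (Fin n) (Fin n) ℂ)
    (hA : A = fun x => A₀ + ∑ k, ((x k : ℂ)) • B k)
    (Smin : Submodule ℂ (EuclideanSpace ℂ (Fin n)))
    (hSmin : Smin = Module.End.eigenspace
      (Matrix.toEuclideanLin (A x₀)) ((lambdaMin (A x₀) : ℂ))) :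
    subdiff (fun x => -(lambdaMin (A x))) x₀ =
      convexHull ℝ {w : Fin t → ℝ | ∃ v ∈ Smin, ‖v‖ = 1 ∧
        ∀ k, w k = -((inner ℂ (Matrix.toEuclideanLin (B k) v) v : ℂ).re)} := by
  have hAH : ∀ x, (A x).IsHermitian := by
    intro x; rw [hA]; exact isHermitian_affine A₀ hA₀ B hB x
  have hAff : ∀ x v, rqv (A x) v = rqv A₀ v + ∑ k, x k * rqv (B k) v := by
    intro x v; rw [hA]; exact rq_affine A₀ B x v
  have hMoEq : {w : Fin t → ℝ | ∃ v ∈ Smin, ‖v‖ = 1 ∧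
        ∀ k, w k = -((inner ℂ (Matrix.toEuclideanLin (B k) v) v : ℂ).re)}
      = {w : Fin t → ℝ | ∃ v ∈ Smin, ‖v‖ = 1 ∧ ∀ k, w k = -(rqv (B k) v)} := rfl
  rw [hMoEq]
  set Mo : Set (Fin t → ℝ) :=
    {w : Fin t → ℝ | ∃ v ∈ Smin, ‖v‖ = 1 ∧ ∀ k, w k = -(rqv (B k) v)} with hMo
  apply Set.Subset.antisymm
  · -- hard direction : subdiff ⊆ convexHull Mo
    intro u hu
    simp only [subdiff, Set.mem_setOf_eq] at hu
    by_contra hK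
    -- compactness of Mo and of its convex hull
    have hMoeq : Mo = (fun v : EuclideanSpace ℂ (Fin n) => fun k => -(rqv (B k) v)) ''
        ((Smin : Set (EuclideanSpace ℂ (Fin n))) ∩ Metric.sphere 0 1) := by
      ext w
      constructor
      · rintro ⟨v, hvS, hv1, hw⟩
        exact ⟨v, ⟨hvS, mem_sphere_zero_iff_norm.mpr hv1⟩, by funext k; exact (hw k).symm⟩
      · rintro ⟨v, ⟨hvS, hv1⟩, rfl⟩
        exact ⟨v, hvS, mem_sphere_zero_iff_norm.mp hv1, fun k => rfl⟩
    have hMoC : IsCompact Mo := by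
      rw [hMoeq]
      refine (((isCompact_sphere 0 1)).inter_left Smin.closed_of_finiteDimensional).image ?_
      exact continuous_pi fun k => (continuous_rqv (B k)).neg
    have hKcl : IsClosed (convexHull ℝ Mo) := (isCompact_convexHull_fin hMoC).isClosed
    obtain ⟨φ, c, hc1, hc2⟩ := geometric_hahn_banach_closed_point
      (convex_convexHull ℝ Mo) hKcl hK
    set d : Fin t → ℝ := fun k => φ (Pi.single k 1) with hd
    have hφ : ∀ y : Fin t → ℝ, φ y = ∑ k, y k * d k := by
      intro y
      have hy : y = ∑ k, y k • (Pi.single k 1 : Fin t → ℝ) := by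
        calc y = ∑ k, Pi.single k (y k) := (Finset.univ_sum_single y).symm
          _ = ∑ k, y k • (Pi.single k 1 : Fin t → ℝ) := by
              refine Finset.sum_congr rfl fun k _ => ?_
              rw [← Pi.single_smul, smul_eq_mul, mul_one]
      conv_lhs => rw [hy]
      rw [map_sum]
      refine Finset.sum_congr rfl fun k _ => ?_
      rw [ContinuousLinearMap.map_smul]
      simp [hd, smul_eq_mul]
    -- the perturbed points and their unit eigenvectors
    set xs : ℕ → (Fin t → ℝ) := fun m => x₀ + (1/((m:ℝ)+1)) • d with hxs
    have htm : ∀ m : ℕ, (0:ℝ) < 1/((m:ℝ)+1) := fun m => by positivity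
    choose v hv1 hvS using fun m => exists_unit_eigenvector hn (hAH (xs m))
    have hfx : ∀ m, rqv (A (xs m)) (v m) = lambdaMin (A (xs m)) :=
      fun m => rq_of_mem_eigenspace (hv1 m) (hvS m)
    set ψ : EuclideanSpace ℂ (Fin n) → ℝ := fun w => ∑ k, d k * rqv (B k) w with hψ
    have hψc : Continuous ψ :=
      continuous_finset_sum _ fun k _ => continuous_const.mul (continuous_rqv (B k))
    -- the master inequalities
    have master : ∀ m, (φ u ≤ -(ψ (v m))) ∧
        (rqv (A x₀) (v m) ≤ lambdaMin (A x₀) + (1/((m:ℝ)+1)) * (-(φ u) - ψ (v m))) := by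
      intro m
      have h1 := hu (xs m)
      have hsum : ∑ k, u k * (xs m k - x₀ k) = (1/((m:ℝ)+1)) * φ u := by
        rw [hφ u, Finset.mul_sum]
        refine Finset.sum_congr rfl fun k _ => ?_
        simp only [hxs, Pi.add_apply, Pi.smul_apply, smul_eq_mul]
        ring
      rw [hsum] at h1
      have h2 : lambdaMin (A x₀) ≤ rqv (A x₀) (v m) := lambdaMin_le_rq hn (hAH x₀) _ (hv1 m)
      have h3 : rqv (A (xs m)) (v m) = rqv (A x₀) (v m) + (1/((m:ℝ)+1)) * ψ (v m) := by
        rw [hAff (xs m) (v m), hAff x₀ (v m), hψ]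
        have hx : ∀ k, xs m k = x₀ k + (1/((m:ℝ)+1)) * d k := fun k => by
          simp only [hxs, Pi.add_apply, Pi.smul_apply, smul_eq_mul]
        simp only [hx, add_mul]
        rw [Finset.sum_add_distrib, Finset.mul_sum, add_assoc]
        congr 1
        congr 1
        refine Finset.sum_congr rfl fun k _ => ?_
        ring
      have h4 := hfx m
      constructor
      · have h5 : (1/((m:ℝ)+1)) * φ u ≤ (1/((m:ℝ)+1)) * (-(ψ (v m))) := by
          nlinarith [h1, h2, h3, h4]
        exact (mul_le_mul_iff_right₀ (htm m)).mp h5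
      · nlinarith [h1, h2, h3, h4]
    -- compactness / limit point
    obtain ⟨vlim, hvlims, σ, hσ, hσt⟩ :=
      (isCompact_sphere (0 : EuclideanSpace ℂ (Fin n)) 1).tendsto_subseq
        (fun m => mem_sphere_zero_iff_norm.mpr (hv1 m))
    have hvlim1 : ‖vlim‖ = 1 := mem_sphere_zero_iff_norm.mp hvlims
    have hc0 : Filter.Tendsto (fun j => 1/(((σ j : ℕ):ℝ)+1)) Filter.atTop (nhds 0) := by
      have h1 : Filter.Tendsto (fun j => ((σ j : ℕ) : ℝ)) Filter.atTop Filter.atTop :=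
        tendsto_natCast_atTop_atTop.comp hσ.tendsto_atTop
      have h2 := Filter.tendsto_atTop_add_const_right Filter.atTop (1:ℝ) h1
      simpa [one_div, Pi.inv_def] using h2.inv_tendsto_atTop
    have hψt : Filter.Tendsto (fun j => ψ (v (σ j))) Filter.atTop (nhds (ψ vlim)) :=
      (hψc.tendsto vlim).comp hσt
    have hrt : Filter.Tendsto (fun j => rqv (A x₀) (v (σ j))) Filter.atTop
        (nhds (rqv (A x₀) vlim)) := ((continuous_rqv (A x₀)).tendsto vlim).comp hσt
    have hupper : Filter.Tendsto
        (fun j => lambdaMin (A x₀) + (1/(((σ j : ℕ):ℝ)+1)) * (-(φ u) - ψ (v (σ j))))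
        Filter.atTop (nhds (lambdaMin (A x₀))) := by
      have h1 := hc0.mul ((tendsto_const_nhds (x := -(φ u))).sub hψt)
      have h2 := (tendsto_const_nhds (x := lambdaMin (A x₀))).add h1
      simpa using h2
    have heq : rqv (A x₀) vlim = lambdaMin (A x₀) := by
      refine tendsto_nhds_unique hrt
        (tendsto_of_tendsto_of_tendsto_of_le_of_le tendsto_const_nhds hupper ?_ ?_)
      · exact fun j => lambdaMin_le_rq hn (hAH x₀) _ (hv1 (σ j))
      · exact fun j => (master (σ j)).2
    have hvlimS : vlim ∈ Smin := by
      rw [hSmin]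
      exact mem_eigenspace_of_rq_eq hn (hAH x₀) hvlim1 heq
    have hwlim : (fun k => -(rqv (B k) vlim)) ∈ Mo := ⟨vlim, hvlimS, hvlim1, fun k => rfl⟩
    have h5 : φ (fun k => -(rqv (B k) vlim)) < c := hc1 _ (subset_convexHull ℝ Mo hwlim)
    have h6 : φ (fun k => -(rqv (B k) vlim)) = -(ψ vlim) := by
      rw [hφ, hψ, ← Finset.sum_neg_distrib]
      exact Finset.sum_congr rfl fun k _ => by ring
    have h7 : φ u ≤ -(ψ vlim) :=
      ge_of_tendsto' hψt.neg (fun j => (master (σ j)).1)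
    linarith
  · -- easy direction
    apply convexHull_min
    · rintro w ⟨vv, hvS, hv1, hw⟩
      simp only [subdiff, Set.mem_setOf_eq]
      intro y
      show -(lambdaMin (A y)) - -(lambdaMin (A x₀)) ≥ _
      have e1 : rqv (A x₀) vv = lambdaMin (A x₀) := by
        apply rq_of_mem_eigenspace hv1
        rw [← hSmin]; exact hvS
      have e2 : lambdaMin (A y) ≤ rqv (A y) vv := lambdaMin_le_rq hn (hAH y) vv hv1
      have hsum : ∑ k, w k * (y k - x₀ k) = rqv (A x₀) vv - rqv (A y) vv := by
        rw [hAff x₀ vv, hAff y vv]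
        have hwk : ∀ k, w k = -(rqv (B k) vv) := hw
        rw [show (rqv A₀ vv + ∑ k, x₀ k * rqv (B k) vv)
            - (rqv A₀ vv + ∑ k, y k * rqv (B k) vv)
            = ∑ k, (x₀ k * rqv (B k) vv - y k * rqv (B k) vv) from by
          rw [Finset.sum_sub_distrib]; ring]
        refine Finset.sum_congr rfl fun k _ => ?_
        rw [hwk k]; ring
      rw [ge_iff_le, hsum]
      linarith
    · -- subdiff is convex
      intro p hp q hq a b ha hb hab
      simp only [subdiff, Set.mem_setOf_eq] at hp hq ⊢
      intro y
      have h1 := hp y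
      have h2 := hq y
      set X := (fun x => -(lambdaMin (A x))) y - (fun x => -(lambdaMin (A x))) x₀ with hX
      have hsum : ∑ k, (a • p + b • q) k * (y k - x₀ k)
          = a * ∑ k, p k * (y k - x₀ k) + b * ∑ k, q k * (y k - x₀ k) := by
        rw [Finset.mul_sum, Finset.mul_sum, ← Finset.sum_add_distrib]
        refine Finset.sum_congr rfl fun k _ => ?_
        simp only [Pi.add_apply, Pi.smul_apply, smul_eq_mul]
        ring
      have hXe : a * X + b * X = X := by rw [← add_mul, hab, one_mul]
      rw [ge_iff_le, hsum]
      have ha1 : a * ∑ k, p k * (y k - x₀ k) ≤ a * X := mul_le_mul_of_nonneg_left h1 ha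
      have hb1 : b * ∑ k, q k * (y k - x₀ k) ≤ b * X := mul_le_mul_of_nonneg_left h2 hb
      linarith
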